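/- Let E be a finite-dimensional real inner product space and R an algebraic curvature tensor on E with signed sectional curvatures. Then for any two orthonormal vectors v, w ∈ E, one has R(w,v)v = 0 (i.e., w lies in the kernel of the Jacobi operator J_v) if and only if the sectional curvature of the plane spanned by v and w vanishes, i.e., R(v,w,w,v) = 0. -/

import Mathlib

open scoped RealInnerProductSpace

/-- An algebraic curvature tensor on a real inner product space `E`: a multilinear map
`R : E × E × E × E → ℝ` with the symmetries of the Riemann curvature tensor.
For vectors `x y z`, the value `R x y z ·` represents the linear functional
`w ↦ ⟨R(x,y)z, w⟩` determined by the curvature operator `R(x,y)z`. -/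
structure AlgCurvTensor (E : Type*) [NormedAddCommGroup E] [InnerProductSpace ℝ E] where
  R : E →ₗ[ℝ] E →ₗ[ℝ] E →ₗ[ℝ] E →ₗ[ℝ] ℝ
  antisym_fst : ∀ x y z w : E, R x y z w = - R y x z w
  antisym_snd : ∀ x y z w : E, R x y z w = - R x y w z
  pair_symm : ∀ x y z w : E, R x y z w = R z w x y
  bianchi : ∀ x y z w : E, R x y z w + R y z x w + R z x y w = 0

/-- `T` has signed sectional curvatures: either all sectional curvatures are `≥ 0`
or all are `≤ 0`. -/
def AlgCurvTensor.SignedSec {E : Type*} [NormedAddCommGroup E] [InnerProductSpace ℝ E]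
    (T : AlgCurvTensor E) : Prop :=
  (∀ x y : E, ‖x‖ = 1 → ‖y‖ = 1 → ⟪x, y⟫ = 0 → 0 ≤ T.R x y y x) ∨
  (∀ x y : E, ‖x‖ = 1 → ‖y‖ = 1 → ⟪x, y⟫ = 0 → T.R x y y x ≤ 0)

lemma jacobi_symm {E : Type*} [NormedAddCommGroup E] [InnerProductSpace ℝ E]
    (T : AlgCurvTensor E) (x y z : E) : T.R x y y z = T.R z y y x := by
  rw [T.pair_symm x y y z, T.antisym_fst y z x y, T.antisym_snd z y x y]
  ring

lemma quad_zero (A B : ℝ) (hB : 0 ≤ B) (h : ∀ s : ℝ, 0 ≤ 2 * s * A + s ^ 2 * B) :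
    A = 0 := by
  have hB1 : (0:ℝ) < B + 1 := by linarith
  have h1 := h (-(A / (B + 1)))
  have h2 : A / (B + 1) * (B + 1) = A := div_mul_cancel₀ A (ne_of_gt hB1)
  nlinarith [sq_nonneg A, sq_nonneg (A / (B + 1)), mul_pos hB1 hB1]

/-- The key step: signed sectional curvature (sign `ε`) plus vanishing `sec(v ∧ w)`
forces `R(w,v,v,u) = 0` for unit `u` orthogonal to both `v` and `w`. -/
lemma key_step {E : Type*} [NormedAddCommGroup E] [InnerProductSpace ℝ E]
    (T : AlgCurvTensor E) (ε : ℝ) (hε : ε ≠ 0)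
    (hpos : ∀ x y : E, ‖x‖ = 1 → ‖y‖ = 1 → ⟪x, y⟫ = 0 → 0 ≤ ε * T.R x y y x)
    (v w u : E) (hv : ‖v‖ = 1) (hw : ‖w‖ = 1) (hu : ‖u‖ = 1)
    (hvw : ⟪v, w⟫ = 0) (hvu : ⟪v, u⟫ = 0) (hwu : ⟪w, u⟫ = 0)
    (hsec : T.R v w w v = 0) : T.R w v v u = 0 := by
  have hsec' : T.R w v v w = 0 := by rw [T.pair_symm w v v w]; exact hsec
  have hB : 0 ≤ ε * T.R u v v u := hpos u v hu hv (by rw [real_inner_comm]; exact hvu)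
  have hwv : ⟪w, v⟫ = 0 := by rw [real_inner_comm]; exact hvw
  have huv : ⟪u, v⟫ = 0 := by rw [real_inner_comm]; exact hvu
  have huw : ⟪u, w⟫ = 0 := by rw [real_inner_comm]; exact hwu
  have huu : ⟪u, u⟫ = (1:ℝ) := by rw [real_inner_self_eq_norm_sq, hu]; norm_num
  have hww : ⟪w, w⟫ = (1:ℝ) := by rw [real_inner_self_eq_norm_sq, hw]; norm_num
  have hkey : ε * T.R w v v u = 0 := by
    apply quad_zero _ (ε * T.R u v v u) hB
    intro s
    set x : E := ‖w + s • u‖⁻¹ • (w + s • u) with hx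
    have hnormsq : ‖w + s • u‖ ^ 2 = 1 + s ^ 2 := by
      rw [← real_inner_self_eq_norm_sq]
      simp only [inner_add_add_self, real_inner_smul_left, real_inner_smul_right,
        hwu, huw, huu, hww]
      ring
    have hpos2 : (0:ℝ) < 1 + s ^ 2 := by positivity
    have hne : w + s • u ≠ 0 := by
      intro h0
      rw [h0, norm_zero] at hnormsq
      nlinarith
    have hxnorm : ‖x‖ = 1 := norm_smul_inv_norm hne
    have hxv : ⟪x, v⟫ = 0 := by
      rw [hx, real_inner_smul_left, inner_add_left, real_inner_smul_left, hwv, huv]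
      ring
    have h0 := hpos x v hxnorm hv hxv
    have hexp : T.R x v v x =
        ‖w + s • u‖⁻¹ * ‖w + s • u‖⁻¹ *
          (T.R w v v w + s * T.R w v v u + s * T.R u v v w + s * (s * T.R u v v u)) := by
      rw [hx]
      simp [map_add, map_smul, LinearMap.add_apply, LinearMap.smul_apply, smul_eq_mul]
      ring
    have husym : T.R u v v w = T.R w v v u := jacobi_symm T u v w
    rw [hexp, hsec', husym] at h0
    have hinv : ‖w + s • u‖⁻¹ * ‖w + s • u‖⁻¹ = (1 + s ^ 2)⁻¹ := by
      rw [← mul_inv]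
      congr 1
      rw [← hnormsq]; ring
    rw [hinv] at h0
    have hinvpos : (0:ℝ) < (1 + s ^ 2)⁻¹ := by positivity
    nlinarith [h0, hinvpos]
  rcases mul_eq_zero.mp hkey with h | h
  · exact absurd h hε
  · exact h

lemma key_full {E : Type*} [NormedAddCommGroup E] [InnerProductSpace ℝ E]
    (T : AlgCurvTensor E) (ε : ℝ) (hε : ε ≠ 0)
    (hpos : ∀ x y : E, ‖x‖ = 1 → ‖y‖ = 1 → ⟪x, y⟫ = 0 → 0 ≤ ε * T.R x y y x)
    (v w : E) (hv : ‖v‖ = 1) (hw : ‖w‖ = 1) (hvw : ⟪v, w⟫ = 0)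
    (hsec : T.R v w w v = 0) : ∀ u : E, T.R w v v u = 0 := by
  intro u
  have hsec' : T.R w v v w = 0 := by rw [T.pair_symm w v v w]; exact hsec
  have hRv : T.R w v v v = 0 := by
    have := T.antisym_snd w v v v; linarith
  have hv2 : ⟪v, v⟫ = (1:ℝ) := by
    rw [real_inner_self_eq_norm_sq, hv]; norm_num
  have hw2 : ⟪w, w⟫ = (1:ℝ) := by
    rw [real_inner_self_eq_norm_sq, hw]; norm_num
  have hwv : ⟪w, v⟫ = 0 := by rw [real_inner_comm]; exact hvw
  set u' : E := u - ⟪v, u⟫ • v - ⟪w, u⟫ • w with hu'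
  have hvu' : ⟪v, u'⟫ = 0 := by
    rw [hu']
    simp [inner_sub_right, real_inner_smul_right, hv2, hvw, hv]
  have hwu' : ⟪w, u'⟫ = 0 := by
    rw [hu']
    simp [inner_sub_right, real_inner_smul_right, hw2, hwv, hw]
  have hdecomp : T.R w v v u = T.R w v v u' + ⟪v, u⟫ * T.R w v v v + ⟪w, u⟫ * T.R w v v w := by
    rw [hu']
    simp [map_sub, map_smul, smul_eq_mul]
    ring
  rw [hdecomp, hRv, hsec']
  have hu'zero : T.R w v v u' = 0 := by
    rcases eq_or_ne u' 0 with h0 | h0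
    · rw [h0]; simp
    · have hn : (0:ℝ) < ‖u'‖ := norm_pos_iff.mpr h0
      set u'' : E := ‖u'‖⁻¹ • u' with hu''
      have hu''norm : ‖u''‖ = 1 := norm_smul_inv_norm h0
      have h1 : T.R w v v u'' = 0 := by
        apply key_step T ε hε hpos v w u'' hv hw hu''norm hvw
        · rw [hu'', real_inner_smul_right, hvu']; ring
        · rw [hu'', real_inner_smul_right, hwu']; ring
        · exact hsec
      have h2 : T.R w v v u'' = ‖u'‖⁻¹ * T.R w v v u' := by
        rw [hu'']; simp [map_smul, smul_eq_mul]
      rw [h2] at h1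
      rcases mul_eq_zero.mp h1 with h | h
      · exact absurd h (by positivity)
      · exact h
  rw [hu'zero]; ring

/-- For an algebraic curvature tensor with signed sectional curvatures and orthonormal
vectors `v, w`, the curvature operator `R(w,v)v` vanishes (i.e., `w ∈ ker J_v`, expressed
by the vanishing of all inner products `⟨R(w,v)v, u⟩ = R w v v u`) if and only if
the sectional curvature `sec(v ∧ w) = R v w w v` vanishes. -/
theorem jacobi_kernel_iff_sec_zero {E : Type*} [NormedAddCommGroup E]
    [InnerProductSpace ℝ E] [FiniteDimensional ℝ E]
    (T : AlgCurvTensor E) (hsigned : T.SignedSec)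
    (v w : E) (hv : ‖v‖ = 1) (hw : ‖w‖ = 1) (hvw : ⟪v, w⟫ = 0) :
    (∀ u : E, T.R w v v u = 0) ↔ T.R v w w v = 0 := by
  constructor
  · intro h
    have := h w
    rw [T.pair_symm w v v w] at this
    exact this
  · intro hsec
    rcases hsigned with hpos | hneg
    · refine key_full T 1 one_ne_zero ?_ v w hv hw hvw hsec
      intro x y hx hy hxy
      simpa using hpos x y hx hy hxy
    · refine key_full T (-1) (by norm_num) ?_ v w hv hw hvw hsec
      intro x y hx hy hxy
      have := hneg x y hx hy hxy
      linarith
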